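/- Let n ≥ 1 and d ≥ 1 be integers and K > 0 a real number, and let A, B : {0,1,…,n} → ℝ satisfy the normalized quantum enumerator conditions: A_0 = B_0 = 1; A_i ≥ 0 and B_i ≥ 0 for all 0 ≤ i ≤ n; A_i = B_i = 0 for 1 ≤ i ≤ d−1; and A_t = (1/(2^n K)) · Σ_{i=0}^{n} B_i · P_t(i,n) for every 0 ≤ t ≤ n. Let f_0, f_1, …, f_n be real numbers and define f(x) = Σ_{t=0}^{n} f_t · P_t(x,n) for x = 0,1,…,n. If f_0 > 0, f_i ≥ 0 for all 1 ≤ i ≤ n, f(0) > 0, and f(i) ≤ 0 for all d ≤ i ≤ n, then 2^n K ≤ f(0)/f_0. -/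

import Mathlib

open Finset

/-- The quaternary Krawtchouk polynomial
`P_t(x,n) = ∑_{j=0}^{t} (−1)^j 3^{t−j} C(x,j) C(n−x, t−j)`. -/
noncomputable def kraw (n t x : ℕ) : ℝ :=
  ∑ j ∈ Finset.range (t + 1),
    (-1 : ℝ) ^ j * 3 ^ (t - j) * (Nat.choose x j) * (Nat.choose (n - x) (t - j))

/-- Linear programming bound: under the normalized quantum enumerator conditions, if
`f_0 > 0`, `f_i ≥ 0` for `1 ≤ i ≤ n`, `f(0) > 0` and `f(i) ≤ 0` for `d ≤ i ≤ n`,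
then `2^n K ≤ f(0)/f_0`. -/
theorem stmt1 (n d : ℕ) (hn : 1 ≤ n) (hd : 1 ≤ d) (K : ℝ) (hK : 0 < K) (A B : ℕ → ℝ)
    (hA0 : A 0 = 1) (hB0 : B 0 = 1)
    (hAnonneg : ∀ i ≤ n, 0 ≤ A i) (hBnonneg : ∀ i ≤ n, 0 ≤ B i)
    (hAzero : ∀ i, 1 ≤ i → i ≤ d - 1 → A i = 0)
    (hBzero : ∀ i, 1 ≤ i → i ≤ d - 1 → B i = 0)
    (hAB : ∀ t ≤ n, A t = (1 / (2 ^ n * K)) * ∑ i ∈ Finset.range (n + 1), B i * kraw n t i)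
    (f F : ℕ → ℝ)
    (hF : ∀ x ≤ n, F x = ∑ t ∈ Finset.range (n + 1), f t * kraw n t x)
    (hf0 : 0 < f 0) (hfnonneg : ∀ i, 1 ≤ i → i ≤ n → 0 ≤ f i)
    (hF0 : 0 < F 0) (hFnonpos : ∀ i, d ≤ i → i ≤ n → F i ≤ 0) :
    2 ^ n * K ≤ F 0 / f 0 := by
  set c : ℝ := 2 ^ n * K with hc
  have hcpos : 0 < c := by positivity
  -- Step 1: key identity ∑ t f t * (c * A t) = ∑ i B i * F i
  have hkey : ∀ t ≤ n, (∑ i ∈ Finset.range (n + 1), B i * kraw n t i) = c * A t := by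
    intro t ht
    rw [hAB t ht]
    field_simp
  have hmain : (∑ t ∈ Finset.range (n + 1), f t * (c * A t))
      = ∑ i ∈ Finset.range (n + 1), B i * F i := by
    have h1 : (∑ t ∈ Finset.range (n + 1), f t * (c * A t))
        = ∑ t ∈ Finset.range (n + 1), ∑ i ∈ Finset.range (n + 1),
            f t * (B i * kraw n t i) := by
      refine Finset.sum_congr rfl fun t ht => ?_
      rw [← hkey t (Nat.lt_succ_iff.mp (Finset.mem_range.mp ht)), Finset.mul_sum]
    rw [h1, Finset.sum_comm]
    refine Finset.sum_congr rfl fun i hi => ?_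
    rw [hF i (Nat.lt_succ_iff.mp (Finset.mem_range.mp hi)), Finset.mul_sum]
    refine Finset.sum_congr rfl fun t ht => ?_
    ring
  -- Step 2: c * f 0 ≤ LHS
  have hL : c * f 0 ≤ ∑ t ∈ Finset.range (n + 1), f t * (c * A t) := by
    have h0 : (0 : ℕ) ∈ Finset.range (n + 1) := by simp
    calc c * f 0 = f 0 * (c * A 0) := by rw [hA0]; ring
    _ ≤ ∑ t ∈ Finset.range (n + 1), f t * (c * A t) := by
        refine Finset.single_le_sum (f := fun t => f t * (c * A t)) ?_ h0
        intro t ht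
        show 0 ≤ f t * (c * A t)
        rcases Nat.eq_zero_or_pos t with rfl | htpos
        · rw [hA0]; positivity
        · have htn : t ≤ n := Nat.lt_succ_iff.mp (Finset.mem_range.mp ht)
          exact mul_nonneg (hfnonneg t htpos htn)
            (mul_nonneg hcpos.le (hAnonneg t htn))
  -- Step 3: RHS ≤ F 0
  have hR : (∑ i ∈ Finset.range (n + 1), B i * F i) ≤ F 0 := by
    have : (∑ i ∈ Finset.range (n + 1), B i * F i)
        = B 0 * F 0 + ∑ i ∈ Finset.Ico 1 (n + 1), B i * F i := by
      rw [Finset.range_eq_Ico, Finset.sum_eq_sum_Ico_succ_bot (by omega)]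
    rw [this, hB0, one_mul]
    have : (∑ i ∈ Finset.Ico 1 (n + 1), B i * F i) ≤ 0 := by
      refine Finset.sum_nonpos fun i hi => ?_
      obtain ⟨hi1, hi2⟩ := Finset.mem_Ico.mp hi
      have hin : i ≤ n := by omega
      by_cases hid : i ≤ d - 1
      · rw [hBzero i hi1 hid]; ring_nf; simp
      · have hdi : d ≤ i := by omega
        exact mul_nonpos_of_nonneg_of_nonpos (hBnonneg i hin) (hFnonpos i hdi hin)
    linarith
  have : c * f 0 ≤ F 0 := by rw [hmain] at hL; linarith
  rw [le_div_iff₀ hf0]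
  linarith
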